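/- Let {A, B} be a binary GCA pair of size s_1×⋯×s_r and {C, D} a binary GCA pair of size t_1×⋯×t_r. Define E = (1/2)[A⊗(C+D) + B⊗(C−D)] and F = (1/2)[B*⊗(C+D) − A*⊗(C−D)]. Then {E, F} is a binary GCA pair of size s_1t_1×⋯×s_rt_r; in particular every entry of E and of F equals ±1. -/

import Mathlib

open scoped BigOperators

/-- An `r`-dimensional complex array, as a complex-valued function on ℤ^r. -/
abbrev Arr (r : ℕ) := (Fin r → ℤ) → ℂ

/-- Index tuple `i` lies in the box `[0, s₁) × ⋯ × [0, s_r)`. -/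
def InBox {r : ℕ} (s : Fin r → ℕ) (i : Fin r → ℤ) : Prop :=
  ∀ k, 0 ≤ i k ∧ i k < (s k : ℤ)

/-- The array vanishes outside the box of size `s`. -/
def SupportedOn {r : ℕ} (s : Fin r → ℕ) (A : Arr r) : Prop :=
  ∀ i, ¬ InBox s i → A i = 0

/-- Aperiodic autocorrelation of an array. -/
noncomputable def autocorr {r : ℕ} (A : Arr r) (δ : Fin r → ℤ) : ℂ :=
  ∑ᶠ i : Fin r → ℤ, A i * (starRingEnd ℂ) (A (i - δ))

/-- Weight of an array: the sum of squared moduli of its entries. -/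
noncomputable def weight {r : ℕ} (A : Arr r) : ℝ :=
  ∑ᶠ i : Fin r → ℤ, ‖A i‖ ^ 2

/-- Flipped-and-conjugated array `A*`, relative to size `s`. -/
noncomputable def flipConj {r : ℕ} (s : Fin r → ℕ) (A : Arr r) : Arr r :=
  fun i => (starRingEnd ℂ) (A fun k => (s k : ℤ) - 1 - i k)

/-- Kronecker product of arrays, where `t` is the size of `B`:
`(A ⊗ B)[i·t + j] = A[i]·B[j]`. -/
noncomputable def kron {r : ℕ} (t : Fin r → ℕ) (A B : Arr r) : Arr r :=
  fun i => A (fun k => i k / (t k : ℤ)) * B (fun k => i k % (t k : ℤ))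

/-- Concatenation of `X` (of extent `u` in dimension `i0`) and `Y` in dimension `i0`. -/
noncomputable def concat {r : ℕ} (i0 : Fin r) (u : ℕ) (X Y : Arr r) : Arr r :=
  fun v => if v i0 < (u : ℤ) then X v else Y (Function.update v i0 (v i0 - u))

/-- A polyphase array of size `s`: supported on the box and all in-box entries
are `N`-th roots of unity for some `N`. -/
def IsPolyphase {r : ℕ} (s : Fin r → ℕ) (A : Arr r) : Prop :=
  SupportedOn s A ∧ ∃ N : ℕ, 0 < N ∧ ∀ i, InBox s i → A i ^ N = 1

/-- A binary array of size `s`: all in-box entries are ±1, zero outside. -/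
def IsBinary {r : ℕ} (s : Fin r → ℕ) (A : Arr r) : Prop :=
  SupportedOn s A ∧ ∀ i, InBox s i → A i = 1 ∨ A i = -1

/-- Entries are zero or of modulus one, supported on the box of size `s`. -/
def IsUnimodZero {r : ℕ} (s : Fin r → ℕ) (A : Arr r) : Prop :=
  SupportedOn s A ∧ ∀ i, InBox s i → A i = 0 ∨ ‖A i‖ = 1

/-- Golay complementarity of a pair: `R_A + R_B = (w(A)+w(B))·Δ`. -/
def ComplementaryPair {r : ℕ} (A B : Arr r) : Prop :=
  ∀ δ : Fin r → ℤ, autocorr A δ + autocorr B δ =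
    if δ = 0 then ((weight A + weight B : ℝ) : ℂ) else 0

/-- Golay complementarity of a quad: `R_A + R_B + R_C + R_D = (Σ w)·Δ`. -/
def ComplementaryQuad {r : ℕ} (A B C D : Arr r) : Prop :=
  ∀ δ : Fin r → ℤ, autocorr A δ + autocorr B δ + autocorr C δ + autocorr D δ =
    if δ = 0 then ((weight A + weight B + weight C + weight D : ℝ) : ℂ) else 0

namespace Stmt5Aux

open Function Finset

variable {r : ℕ}

/-- Cross-correlation. -/
noncomputable def ccorr (X Y : Arr r) (δ : Fin r → ℤ) : ℂ :=
  ∑ᶠ i : Fin r → ℤ, X i * (starRingEnd ℂ) (Y (i - δ))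

lemma autocorr_eq (X : Arr r) (δ : Fin r → ℤ) : autocorr X δ = ccorr X X δ := rfl

lemma inBox_finite (s : Fin r → ℕ) : {i : Fin r → ℤ | InBox s i}.Finite := by
  refine (Set.Finite.pi (t := fun k => Set.Ico (0:ℤ) (s k)) fun k => Set.finite_Ico _ _).subset ?_
  intro i hi k _
  exact ⟨(hi k).1, (hi k).2⟩

lemma supportedOn_finite {s : Fin r → ℕ} {A : Arr r} (h : SupportedOn s A) :
    (support A).Finite := by
  refine (inBox_finite s).subset ?_
  intro i hi
  simp only [Set.mem_setOf_eq]
  by_contra h'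
  exact hi (h i h')

lemma support_mul_left (X : Arr r) (g : (Fin r → ℤ) → ℂ) :
    (support fun i => X i * g i) ⊆ support X := by
  intro i hi
  simp only [mem_support] at hi ⊢
  intro h; exact hi (by simp [h])

lemma finite_mul_left {X : Arr r} (hX : (support X).Finite) (g : (Fin r → ℤ) → ℂ) :
    (support fun i => X i * g i).Finite :=
  hX.subset (support_mul_left X g)

/-- the box as a Finset -/
noncomputable def boxF (s : Fin r → ℕ) : Finset (Fin r → ℤ) :=
  Fintype.piFinset fun k => Finset.Ico (0:ℤ) (s k)

lemma mem_boxF {s : Fin r → ℕ} {i : Fin r → ℤ} : i ∈ boxF s ↔ InBox s i := by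
  simp [boxF, Fintype.mem_piFinset, Finset.mem_Ico, InBox]


lemma ccorr_add_add (X1 X2 Y1 Y2 : Arr r)
    (h1 : (support X1).Finite) (h2 : (support X2).Finite) (δ : Fin r → ℤ) :
    ccorr (fun i => X1 i + X2 i) (fun i => Y1 i + Y2 i) δ =
      ccorr X1 Y1 δ + ccorr X1 Y2 δ + ccorr X2 Y1 δ + ccorr X2 Y2 δ := by
  unfold ccorr
  have e : ∀ i : Fin r → ℤ,
      (X1 i + X2 i) * (starRingEnd ℂ) (Y1 (i - δ) + Y2 (i - δ)) =
        (X1 i * (starRingEnd ℂ) (Y1 (i - δ)) + X1 i * (starRingEnd ℂ) (Y2 (i - δ))) +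
        (X2 i * (starRingEnd ℂ) (Y1 (i - δ)) + X2 i * (starRingEnd ℂ) (Y2 (i - δ))) := by
    intro i; rw [map_add]; ring
  calc ∑ᶠ i, (X1 i + X2 i) * (starRingEnd ℂ) (Y1 (i - δ) + Y2 (i - δ))
      = ∑ᶠ i, ((X1 i * (starRingEnd ℂ) (Y1 (i - δ)) + X1 i * (starRingEnd ℂ) (Y2 (i - δ))) +
        (X2 i * (starRingEnd ℂ) (Y1 (i - δ)) + X2 i * (starRingEnd ℂ) (Y2 (i - δ)))) :=
        finsum_congr e
    _ = _ := by
        rw [finsum_add_distrib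
            ((h1.subset (support_mul_left _ _)).union (h1.subset (support_mul_left _ _)) |>.subset
              (Function.support_add _ _)),
          finsum_add_distrib (h1.subset (support_mul_left _ _)) (h1.subset (support_mul_left _ _)),
          finsum_add_distrib (h2.subset (support_mul_left _ _)) (h2.subset (support_mul_left _ _))]
        · ring
        · exact ((h2.subset (support_mul_left _ _)).union (h2.subset (support_mul_left _ _))).subset
            (Function.support_add _ _)

lemma ccorr_sub_sub (X1 X2 Y1 Y2 : Arr r)
    (h1 : (support X1).Finite) (h2 : (support X2).Finite) (δ : Fin r → ℤ) :
    ccorr (fun i => X1 i - X2 i) (fun i => Y1 i - Y2 i) δ =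
      ccorr X1 Y1 δ - ccorr X1 Y2 δ - ccorr X2 Y1 δ + ccorr X2 Y2 δ := by
  have h2' : (support fun i => -X2 i).Finite := by
    refine h2.subset ?_
    intro i hi; simp only [mem_support] at hi ⊢; intro h; exact hi (by simp [h])
  have := ccorr_add_add X1 (fun i => -X2 i) Y1 (fun i => -Y2 i) h1 h2' δ
  have eX : (fun i => X1 i - X2 i) = fun i => X1 i + -X2 i := by funext i; ring
  have eY : (fun i => Y1 i - Y2 i) = fun i => Y1 i + -Y2 i := by funext i; ring
  rw [eX, eY, this]
  have n1 : ∀ (U V : Arr r), ccorr U (fun i => -V i) δ = -ccorr U V δ := by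
    intro U V
    unfold ccorr
    rw [← finsum_neg_distrib]
    exact finsum_congr fun i => by rw [map_neg]; ring
  have n2 : ∀ (U V : Arr r), ccorr (fun i => -U i) V δ = -ccorr U V δ := by
    intro U V
    unfold ccorr
    rw [← finsum_neg_distrib]
    exact finsum_congr fun i => by ring
  have n3 : ∀ (U V : Arr r), ccorr (fun i => -U i) (fun i => -V i) δ = ccorr U V δ := by
    intro U V; rw [n2, n1]; ring
  rw [n1, n2, n3]; ring


lemma SupportedOn.add {s : Fin r → ℕ} {X Y : Arr r} (hX : SupportedOn s X)
    (hY : SupportedOn s Y) : SupportedOn s (fun i => X i + Y i) := by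
  intro i hi; show X i + Y i = 0; rw [hX i hi, hY i hi, add_zero]

lemma SupportedOn.sub {s : Fin r → ℕ} {X Y : Arr r} (hX : SupportedOn s X)
    (hY : SupportedOn s Y) : SupportedOn s (fun i => X i - Y i) := by
  intro i hi; show X i - Y i = 0; rw [hX i hi, hY i hi, sub_zero]

lemma flipConj_supported {s : Fin r → ℕ} {X : Arr r} (hX : SupportedOn s X) :
    SupportedOn s (flipConj s X) := by
  intro i hi
  unfold flipConj
  rw [hX _ ?_, map_zero]
  intro hbox
  apply hi
  intro k
  have h2 : (0:ℤ) ≤ (s k : ℤ) - 1 - i k ∧ (s k : ℤ) - 1 - i k < (s k : ℤ) := hbox k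
  constructor <;> omega

lemma eq_zero_of_deg {t : Fin r → ℕ} {U : Arr r} (hU : SupportedOn t U)
    (k : Fin r) (hk : t k = 0) : ∀ j, U j = 0 := by
  intro j
  apply hU
  intro hbox
  have := hbox k
  rw [hk] at this
  push_cast at this
  omega

lemma kron_supported {s t : Fin r → ℕ} {X U : Arr r} (hX : SupportedOn s X)
    (hU : SupportedOn t U) : SupportedOn (fun k => s k * t k) (kron t X U) := by
  intro i hi
  unfold kron
  unfold InBox at hi
  rw [not_forall] at hi
  obtain ⟨k, hk⟩ := hi
  by_cases ht : t k = 0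
  · rw [eq_zero_of_deg hU k ht, mul_zero]
  · have htpos : (0:ℤ) < (t k : ℤ) := by
      have : 0 < t k := Nat.pos_of_ne_zero ht
      exact_mod_cast this
    rw [hX _ ?_, zero_mul]
    intro hbox
    apply hk
    have hd := hbox k
    push_cast
    constructor
    · by_contra hneg
      push_neg at hneg
      exact absurd hd.1 (not_le.mpr (Int.ediv_neg_of_neg_of_pos hneg htpos))
    · by_contra hge
      push_neg at hge
      exact absurd hd.2 (not_lt.mpr ((Int.le_ediv_iff_mul_le htpos).mpr hge))


section IntFacts

lemma idiv_shift {T : ℤ} (hT : T ≠ 0) (q b : ℤ) : (q*T + b)/T = q + b/T := by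
  rw [add_comm, Int.add_mul_ediv_right _ _ hT, add_comm]

lemma imod_shift (T q b : ℤ) : (q*T + b) % T = b % T := by
  rw [add_comm, Int.add_mul_emod_self_right]

lemma isplit (T a : ℤ) : a = (a/T)*T + a % T := (Int.ediv_mul_add_emod a T).symm

lemma idiv_sub {T : ℤ} (hT : T ≠ 0) (a d : ℤ) : (a-d)/T = a/T + (a % T - d)/T := by
  have h : a - d = (a/T)*T + (a % T - d) := by
    have := isplit T a; omega
  rw [h, idiv_shift hT]

lemma imod_sub (T a d : ℤ) : (a-d) % T = (a % T - d) % T := by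
  have h : a - d = (a/T)*T + (a % T - d) := by
    have := isplit T a; omega
  rw [h, imod_shift]

lemma imod_small {T b : ℤ} (h0 : 0 ≤ b) (h1 : b < T) : b % T = b := Int.emod_eq_of_lt h0 h1

lemma idiv_small {T b : ℤ} (h0 : 0 ≤ b) (h1 : b < T) : b / T = 0 := Int.ediv_eq_zero_of_lt h0 h1

end IntFacts

lemma ccorr_flip {s t : Fin r → ℕ} (ht : ∀ k, (0:ℤ) < (t k : ℤ)) (X Y U V : Arr r)
    (δ : Fin r → ℤ) :
    ccorr (kron t (flipConj s X) U) (kron t (flipConj s Y) V) δ =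
      ccorr (kron t Y U) (kron t X V) δ := by
  classical
  have htne : ∀ k, ((t k : ℤ)) ≠ 0 := fun k => (ht k).ne'
  set g : (Fin r → ℤ) → (Fin r → ℤ) :=
    fun i k => ((s k:ℤ) - 1 - ((i k - δ k) / (t k:ℤ))) * (t k:ℤ) + i k % (t k:ℤ) with hg
  have e1 : ∀ (i : Fin r → ℤ) (k), g i k / (t k:ℤ) = (s k:ℤ) - 1 - ((i k - δ k)/(t k:ℤ)) := by
    intro i k
    rw [hg]
    simp only []
    rw [idiv_shift (htne k), idiv_small (Int.emod_nonneg _ (htne k)) (Int.emod_lt_of_pos _ (ht k)),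
      add_zero]
  have e2 : ∀ (i : Fin r → ℤ) (k), g i k % (t k:ℤ) = i k % (t k:ℤ) := by
    intro i k
    rw [hg]
    simp only []
    rw [imod_shift, imod_small (Int.emod_nonneg _ (htne k)) (Int.emod_lt_of_pos _ (ht k))]
  have e3 : ∀ (i : Fin r → ℤ) (k), (g i k - δ k) / (t k:ℤ) = (s k:ℤ) - 1 - (i k / (t k:ℤ)) := by
    intro i k
    rw [idiv_sub (htne k), e1, e2, idiv_sub (htne k) (i k) (δ k)]
    ring
  have e4 : ∀ (i : Fin r → ℤ) (k), (g i k - δ k) % (t k:ℤ) = (i k - δ k) % (t k:ℤ) := by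
    intro i k
    rw [imod_sub, e2, ← imod_sub]
  have hinv : Function.Involutive g := by
    intro i
    funext k
    have : g (g i) k = ((s k:ℤ) - 1 - ((g i k - δ k) / (t k:ℤ))) * (t k:ℤ) + g i k % (t k:ℤ) := rfl
    rw [this, e3, e2]
    have h2 : (s k:ℤ) - 1 - ((s k:ℤ) - 1 - i k/(t k:ℤ)) = i k/(t k:ℤ) := by ring
    rw [h2]
    exact (isplit (t k:ℤ) (i k)).symm
  unfold ccorr kron flipConj
  refine finsum_eq_of_bijective g hinv.bijective ?_
  intro i
  simp only [Pi.sub_apply]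
  have r1 : (fun k => g i k / (t k:ℤ)) = fun k => (s k:ℤ) - 1 - ((i k - δ k)/(t k:ℤ)) :=
    funext (e1 i)
  have r2 : (fun k => g i k % (t k:ℤ)) = fun k => i k % (t k:ℤ) := funext (e2 i)
  have r3 : (fun k => (g i k - δ k) / (t k:ℤ)) = fun k => (s k:ℤ) - 1 - (i k / (t k:ℤ)) :=
    funext (e3 i)
  have r4 : (fun k => (g i k - δ k) % (t k:ℤ)) = fun k => (i k - δ k) % (t k:ℤ) :=
    funext (e4 i)
  rw [r1, r2, r3, r4]
  simp only [map_mul, Complex.conj_conj]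
  ring


lemma kron_add_right (t : Fin r → ℕ) (X C D : Arr r) :
    kron t X (fun j => C j + D j) = fun i => kron t X C i + kron t X D i := by
  funext i; simp [kron, mul_add]

lemma kron_sub_right (t : Fin r → ℕ) (X C D : Arr r) :
    kron t X (fun j => C j - D j) = fun i => kron t X C i - kron t X D i := by
  funext i; simp [kron, mul_sub]

lemma autocorr_zero {X : Arr r} (h : (support X).Finite) :
    autocorr X 0 = ((weight X : ℝ) : ℂ) := by
  unfold autocorr weight
  have e : ∀ i : Fin r → ℤ, X i * (starRingEnd ℂ) (X (i - 0)) = ((‖X i‖ ^ 2 : ℝ) : ℂ) := by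
    intro i
    rw [sub_zero, Complex.mul_conj]
    norm_cast
    rw [Complex.normSq_eq_norm_sq]
  rw [finsum_congr e]
  have hsupp : (support fun i => ‖X i‖ ^ 2).Finite := by
    refine h.subset ?_
    intro i hi
    simp only [mem_support] at hi ⊢
    intro h'; exact hi (by simp [h'])
  exact ((Complex.ofRealHom : ℝ →+* ℂ).toAddMonoidHom.map_finsum hsupp).symm

lemma inBox_mul {s t : Fin r → ℕ} {i : Fin r → ℤ} :
    InBox (fun k => s k * t k) i ↔ ∀ k, 0 ≤ i k ∧ i k < (s k : ℤ) * (t k : ℤ) := by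
  unfold InBox
  refine forall_congr' fun k => ?_
  rw [show (((fun k => s k * t k) k : ℕ) : ℤ) = ((s k : ℤ) * (t k : ℤ)) by push_cast; ring]

lemma quad_sum {s t : Fin r → ℕ} {A B C D : Arr r}
    (ht : ∀ k, (0:ℤ) < (t k : ℤ))
    (hA : SupportedOn s A) (hB : SupportedOn s B)
    (hC : SupportedOn t C) (hD : SupportedOn t D)
    (hAB : ComplementaryPair A B) (hCD : ComplementaryPair C D)
    (δ : Fin r → ℤ) (hδ : δ ≠ 0) :
    autocorr (kron t A C) δ + autocorr (kron t A D) δ + autocorr (kron t B C) δ +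
      autocorr (kron t B D) δ = 0 := by
  classical
  have htne : ∀ k, ((t k : ℤ)) ≠ 0 := fun k => (ht k).ne'
  have hsAC := kron_supported hA hC
  have hsAD := kron_supported hA hD
  have hsBC := kron_supported hB hC
  have hsBD := kron_supported hB hD
  set T : (Fin r → ℤ) → ℂ := fun i =>
    kron t A C i * (starRingEnd ℂ) (kron t A C (i - δ)) +
      kron t A D i * (starRingEnd ℂ) (kron t A D (i - δ)) +
      kron t B C i * (starRingEnd ℂ) (kron t B C (i - δ)) +
      kron t B D i * (starRingEnd ℂ) (kron t B D (i - δ)) with hT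
  have fin1 := finite_mul_left (supportedOn_finite hsAC)
    (fun i => (starRingEnd ℂ) (kron t A C (i - δ)))
  have fin2 := finite_mul_left (supportedOn_finite hsAD)
    (fun i => (starRingEnd ℂ) (kron t A D (i - δ)))
  have fin3 := finite_mul_left (supportedOn_finite hsBC)
    (fun i => (starRingEnd ℂ) (kron t B C (i - δ)))
  have fin4 := finite_mul_left (supportedOn_finite hsBD)
    (fun i => (starRingEnd ℂ) (kron t B D (i - δ)))
  have step1 : autocorr (kron t A C) δ + autocorr (kron t A D) δ + autocorr (kron t B C) δ +
      autocorr (kron t B D) δ = ∑ᶠ i, T i := by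
    unfold autocorr
    rw [hT]
    rw [finsum_add_distrib (((fin1.union fin2).subset (Function.support_add _ _)).union fin3
        |>.subset (Function.support_add _ _)) fin4,
      finsum_add_distrib ((fin1.union fin2).subset (Function.support_add _ _)) fin3,
      finsum_add_distrib fin1 fin2]
  rw [step1]
  set W : (Fin r → ℤ) → (Fin r → ℤ) → ℂ := fun a b =>
    (A a * (starRingEnd ℂ) (A fun k => a k + (b k - δ k) / (t k : ℤ)) +
      B a * (starRingEnd ℂ) (B fun k => a k + (b k - δ k) / (t k : ℤ))) *
    (C b * (starRingEnd ℂ) (C fun k => (b k - δ k) % (t k : ℤ)) +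
      D b * (starRingEnd ℂ) (D fun k => (b k - δ k) % (t k : ℤ))) with hW
  have hpoint : ∀ i : Fin r → ℤ,
      T i = W (fun k => i k / (t k : ℤ)) (fun k => i k % (t k : ℤ)) := by
    intro i
    have r1 : (fun k => (i k - δ k) / (t k : ℤ)) =
        fun k => i k / (t k : ℤ) + (i k % (t k : ℤ) - δ k) / (t k : ℤ) :=
      funext fun k => idiv_sub (htne k) _ _
    have r2 : (fun k => (i k - δ k) % (t k : ℤ)) =
        fun k => (i k % (t k : ℤ) - δ k) % (t k : ℤ) :=
      funext fun k => imod_sub _ _ _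
    rw [hT, hW]
    simp only [kron, Pi.sub_apply]
    rw [r1, r2]
    simp only [map_mul]
    ring
  have hsuppT : support T ⊆ ↑(boxF (fun k => s k * t k)) := by
    intro i hi
    rw [Finset.mem_coe, mem_boxF]
    by_contra hbox
    apply hi
    rw [hT]
    simp only [hsAC i hbox, hsAD i hbox, hsBC i hbox, hsBD i hbox, zero_mul, add_zero, zero_add]
  have step2 : ∑ᶠ i, T i = ∑ i ∈ boxF (fun k => s k * t k), T i :=
    finsum_eq_finset_sum_of_support_subset T hsuppT
  rw [step2]
  have step3 : ∑ i ∈ boxF (fun k => s k * t k), T i = ∑ p ∈ boxF s ×ˢ boxF t, W p.1 p.2 := by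
    refine Finset.sum_bij' (fun i _ => ((fun k => i k / (t k : ℤ)), (fun k => i k % (t k : ℤ))))
      (fun p _ => fun k => p.1 k * (t k : ℤ) + p.2 k) ?_ ?_ ?_ ?_ ?_
    · intro a ha
      rw [mem_boxF, inBox_mul] at ha
      rw [Finset.mem_product, mem_boxF, mem_boxF]
      constructor
      · intro k
        exact ⟨Int.ediv_nonneg (ha k).1 (ht k).le, (Int.ediv_lt_iff_lt_mul (ht k)).mpr (ha k).2⟩
      · intro k
        exact ⟨Int.emod_nonneg _ (htne k), Int.emod_lt_of_pos _ (ht k)⟩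
    · intro p hp
      rw [Finset.mem_product, mem_boxF, mem_boxF] at hp
      rw [mem_boxF, inBox_mul]
      intro k
      have h1 := hp.1 k
      have h2 := hp.2 k
      show (0:ℤ) ≤ p.1 k * (t k:ℤ) + p.2 k ∧ p.1 k * (t k:ℤ) + p.2 k < (s k:ℤ) * (t k:ℤ)
      refine ⟨add_nonneg (mul_nonneg h1.1 (ht k).le) h2.1, ?_⟩
      have h3 : (p.1 k + 1) * (t k : ℤ) ≤ (s k : ℤ) * (t k : ℤ) :=
        mul_le_mul_of_nonneg_right (by omega) (ht k).le
      nlinarith [h2.2]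
    · intro a ha
      funext k
      exact (isplit (t k : ℤ) (a k)).symm
    · intro p hp
      rw [Finset.mem_product, mem_boxF, mem_boxF] at hp
      have h1 : (fun k => (p.1 k * (t k:ℤ) + p.2 k) / (t k : ℤ)) = p.1 := by
        funext k
        rw [idiv_shift (htne k), idiv_small (hp.2 k).1 (hp.2 k).2, add_zero]
      have h2 : (fun k => (p.1 k * (t k:ℤ) + p.2 k) % (t k : ℤ)) = p.2 := by
        funext k
        rw [imod_shift, imod_small (hp.2 k).1 (hp.2 k).2]
      exact Prod.ext h1 h2
    · intro a ha
      exact hpoint a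
  rw [step3]
  have step4 : ∑ p ∈ boxF s ×ˢ boxF t, W p.1 p.2 = ∑ b ∈ boxF t, ∑ a ∈ boxF s, W a b := by
    rw [Finset.sum_product]
    exact Finset.sum_comm
  rw [step4]
  have inner : ∀ b : Fin r → ℤ,
      ∑ a ∈ boxF s, W a b =
        (if (fun k => -((b k - δ k) / (t k : ℤ))) = (0 : Fin r → ℤ) then
          ((weight A + weight B : ℝ) : ℂ) else 0) *
        (C b * (starRingEnd ℂ) (C fun k => (b k - δ k) % (t k : ℤ)) +
          D b * (starRingEnd ℂ) (D fun k => (b k - δ k) % (t k : ℤ))) := by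
    intro b
    have hsub : support (fun a : Fin r → ℤ =>
        A a * (starRingEnd ℂ) (A fun k => a k + (b k - δ k) / (t k : ℤ)) +
          B a * (starRingEnd ℂ) (B fun k => a k + (b k - δ k) / (t k : ℤ))) ⊆ ↑(boxF s) := by
      intro a ha
      rw [Finset.mem_coe, mem_boxF]
      by_contra hbox
      apply ha
      simp only [hA a hbox, hB a hbox, zero_mul, add_zero]
    have finA := finite_mul_left (supportedOn_finite hA)
      (fun a => (starRingEnd ℂ) (A fun k => a k + (b k - δ k) / (t k : ℤ)))
    have finB := finite_mul_left (supportedOn_finite hB)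
      (fun a => (starRingEnd ℂ) (B fun k => a k + (b k - δ k) / (t k : ℤ)))
    have harg : ∀ (a : Fin r → ℤ),
        (a - fun k => -((b k - δ k) / (t k : ℤ))) = fun k => a k + (b k - δ k) / (t k : ℤ) := by
      intro a
      funext k
      simp [Pi.sub_apply, sub_neg_eq_add]
    have eA : autocorr A (fun k => -((b k - δ k) / (t k : ℤ))) =
        ∑ᶠ a, A a * (starRingEnd ℂ) (A fun k => a k + (b k - δ k) / (t k : ℤ)) := by
      unfold autocorr
      exact finsum_congr fun a => by rw [harg a]
    have eB : autocorr B (fun k => -((b k - δ k) / (t k : ℤ))) =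
        ∑ᶠ a, B a * (starRingEnd ℂ) (B fun k => a k + (b k - δ k) / (t k : ℤ)) := by
      unfold autocorr
      exact finsum_congr fun a => by rw [harg a]
    calc ∑ a ∈ boxF s, W a b
        = (∑ a ∈ boxF s,
            (A a * (starRingEnd ℂ) (A fun k => a k + (b k - δ k) / (t k : ℤ)) +
              B a * (starRingEnd ℂ) (B fun k => a k + (b k - δ k) / (t k : ℤ)))) *
          (C b * (starRingEnd ℂ) (C fun k => (b k - δ k) % (t k : ℤ)) +
            D b * (starRingEnd ℂ) (D fun k => (b k - δ k) % (t k : ℤ))) := by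
          rw [Finset.sum_mul]
      _ = _ := by
          congr 1
          rw [← finsum_eq_finset_sum_of_support_subset _ hsub, finsum_add_distrib finA finB,
            ← eA, ← eB, hAB (fun k => -((b k - δ k) / (t k : ℤ)))]
  have step5 : ∑ b ∈ boxF t, ∑ a ∈ boxF s, W a b =
      ((weight A + weight B : ℝ) : ℂ) *
        ∑ b ∈ boxF t, (C b * (starRingEnd ℂ) (C fun k => b k - δ k) +
          D b * (starRingEnd ℂ) (D fun k => b k - δ k)) := by
    rw [Finset.mul_sum]
    refine Finset.sum_congr rfl fun b hb => ?_
    rw [inner b]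
    by_cases hcase : (fun k => -((b k - δ k) / (t k : ℤ))) = (0 : Fin r → ℤ)
    · rw [if_pos hcase]
      have hzero : ∀ k, (b k - δ k) / (t k : ℤ) = 0 := by
        intro k
        have := congrFun hcase k
        simpa using this
      have hmod : (fun k => (b k - δ k) % (t k : ℤ)) = fun k => b k - δ k := by
        funext k
        have h5 := isplit (t k : ℤ) (b k - δ k)
        rw [hzero k, zero_mul, zero_add] at h5
        exact h5.symm
      rw [hmod]
    · rw [if_neg hcase, zero_mul]
      have hnbox : ¬ InBox t (fun k => b k - δ k) := by
        intro hbox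
        apply hcase
        funext k
        have hk := hbox k
        simp only [Pi.zero_apply, neg_eq_zero]
        exact idiv_small hk.1 hk.2
      rw [hC _ hnbox, hD _ hnbox]
      simp
  rw [step5]
  have step6 : ∑ b ∈ boxF t, (C b * (starRingEnd ℂ) (C fun k => b k - δ k) +
      D b * (starRingEnd ℂ) (D fun k => b k - δ k)) = autocorr C δ + autocorr D δ := by
    have finC := finite_mul_left (supportedOn_finite hC)
      (fun b => (starRingEnd ℂ) (C fun k => b k - δ k))
    have finD := finite_mul_left (supportedOn_finite hD)
      (fun b => (starRingEnd ℂ) (D fun k => b k - δ k))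
    have hsub : support (fun b => C b * (starRingEnd ℂ) (C fun k => b k - δ k) +
        D b * (starRingEnd ℂ) (D fun k => b k - δ k)) ⊆ ↑(boxF t) := by
      intro b hb
      rw [Finset.mem_coe, mem_boxF]
      by_contra hbox
      apply hb
      simp only [hC b hbox, hD b hbox, zero_mul, add_zero]
    rw [← finsum_eq_finset_sum_of_support_subset _ hsub, finsum_add_distrib finC finD]
    congr 1
  rw [step6, hCD δ, if_neg hδ, mul_zero]


lemma conj_half : (starRingEnd ℂ) (1/2 : ℂ) = 1/2 := by
  rw [map_div₀, map_one, map_ofNat]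

lemma finite_addmul {X Y : Arr r} (hX : (support X).Finite) (hY : (support Y).Finite)
    (g : (Fin r → ℤ) → ℂ) : (support fun i => (X i + Y i) * g i).Finite := by
  refine (hX.union hY).subset ?_
  intro i hi
  simp only [mem_support] at hi
  simp only [Set.mem_union, mem_support]
  by_contra h
  push_neg at h
  exact hi (by rw [h.1, h.2, add_zero, zero_mul])

lemma finite_submul {X Y : Arr r} (hX : (support X).Finite) (hY : (support Y).Finite)
    (g : (Fin r → ℤ) → ℂ) : (support fun i => (X i - Y i) * g i).Finite := by
  refine (hX.union hY).subset ?_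
  intro i hi
  simp only [mem_support] at hi
  simp only [Set.mem_union, mem_support]
  by_contra h
  push_neg at h
  exact hi (by rw [h.1, h.2, sub_zero, zero_mul])

lemma EF_corr {s t : Fin r → ℕ} {A B C D : Arr r} (ht : ∀ k, (0:ℤ) < (t k : ℤ))
    (hA : SupportedOn s A) (hB : SupportedOn s B)
    (hC : SupportedOn t C) (hD : SupportedOn t D)
    (hAB : ComplementaryPair A B) (hCD : ComplementaryPair C D)
    (δ : Fin r → ℤ) (hδ : δ ≠ 0) :
    autocorr (fun i => (1 / 2 : ℂ) *
        (kron t A (fun j => C j + D j) i + kron t B (fun j => C j - D j) i)) δ +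
      autocorr (fun i => (1 / 2 : ℂ) *
        (kron t (flipConj s B) (fun j => C j + D j) i -
          kron t (flipConj s A) (fun j => C j - D j) i)) δ = 0 := by
  classical
  have hP : SupportedOn t (fun j => C j + D j) := SupportedOn.add hC hD
  have hM : SupportedOn t (fun j => C j - D j) := SupportedOn.sub hC hD
  have hBf : SupportedOn s (flipConj s B) := flipConj_supported hB
  have hAf : SupportedOn s (flipConj s A) := flipConj_supported hA
  have fG1 := supportedOn_finite (kron_supported hA hP)
  have fG2 := supportedOn_finite (kron_supported hB hM)
  have fH1 := supportedOn_finite (kron_supported hBf hP)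
  have fH2 := supportedOn_finite (kron_supported hAf hM)
  have fAC := supportedOn_finite (kron_supported hA hC)
  have fAD := supportedOn_finite (kron_supported hA hD)
  have fBC := supportedOn_finite (kron_supported hB hC)
  have fBD := supportedOn_finite (kron_supported hB hD)
  have fBP := supportedOn_finite (kron_supported hB hP)
  have fAM := supportedOn_finite (kron_supported hA hM)
  set G1 := kron t A (fun j => C j + D j) with hG1
  set G2 := kron t B (fun j => C j - D j) with hG2
  set H1 := kron t (flipConj s B) (fun j => C j + D j) with hH1
  set H2 := kron t (flipConj s A) (fun j => C j - D j) with hH2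
  have hEexp : autocorr (fun i => (1 / 2 : ℂ) * (G1 i + G2 i)) δ =
      (1/4 : ℂ) * ccorr (fun i => G1 i + G2 i) (fun i => G1 i + G2 i) δ := by
    unfold autocorr ccorr
    have e : ∀ i : Fin r → ℤ,
        (1 / 2 : ℂ) * (G1 i + G2 i) *
          (starRingEnd ℂ) ((1 / 2 : ℂ) * (G1 (i - δ) + G2 (i - δ))) =
          (1/4 : ℂ) * ((G1 i + G2 i) * (starRingEnd ℂ) (G1 (i - δ) + G2 (i - δ))) := by
      intro i
      rw [map_mul, conj_half]
      ring
    rw [finsum_congr e, ← mul_finsum' _ _ (finite_addmul fG1 fG2 _)]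
  have hFexp : autocorr (fun i => (1 / 2 : ℂ) * (H1 i - H2 i)) δ =
      (1/4 : ℂ) * ccorr (fun i => H1 i - H2 i) (fun i => H1 i - H2 i) δ := by
    unfold autocorr ccorr
    have e : ∀ i : Fin r → ℤ,
        (1 / 2 : ℂ) * (H1 i - H2 i) *
          (starRingEnd ℂ) ((1 / 2 : ℂ) * (H1 (i - δ) - H2 (i - δ))) =
          (1/4 : ℂ) * ((H1 i - H2 i) * (starRingEnd ℂ) (H1 (i - δ) - H2 (i - δ))) := by
      intro i
      rw [map_mul, conj_half, map_sub]
      ring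
    rw [finsum_congr e, ← mul_finsum' _ _ (finite_submul fH1 fH2 _)]
  rw [hEexp, hFexp,
    ccorr_add_add G1 G2 G1 G2 fG1 fG2 δ,
    ccorr_sub_sub H1 H2 H1 H2 fH1 fH2 δ]
  rw [hG1, hG2, hH1, hH2]
  rw [ccorr_flip ht B B _ _ δ, ccorr_flip ht B A _ _ δ, ccorr_flip ht A B _ _ δ,
    ccorr_flip ht A A _ _ δ]
  have hx11 : ccorr (kron t A fun j => C j + D j) (kron t A fun j => C j + D j) δ =
      ccorr (kron t A C) (kron t A C) δ + ccorr (kron t A C) (kron t A D) δ +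
        ccorr (kron t A D) (kron t A C) δ + ccorr (kron t A D) (kron t A D) δ := by
    rw [kron_add_right t A C D]
    exact ccorr_add_add _ _ _ _ fAC fAD δ
  have hx22 : ccorr (kron t B fun j => C j - D j) (kron t B fun j => C j - D j) δ =
      ccorr (kron t B C) (kron t B C) δ - ccorr (kron t B C) (kron t B D) δ -
        ccorr (kron t B D) (kron t B C) δ + ccorr (kron t B D) (kron t B D) δ := by
    rw [kron_sub_right t B C D]
    exact ccorr_sub_sub _ _ _ _ fBC fBD δ
  have hy11 : ccorr (kron t B fun j => C j + D j) (kron t B fun j => C j + D j) δ =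
      ccorr (kron t B C) (kron t B C) δ + ccorr (kron t B C) (kron t B D) δ +
        ccorr (kron t B D) (kron t B C) δ + ccorr (kron t B D) (kron t B D) δ := by
    rw [kron_add_right t B C D]
    exact ccorr_add_add _ _ _ _ fBC fBD δ
  have hy22 : ccorr (kron t A fun j => C j - D j) (kron t A fun j => C j - D j) δ =
      ccorr (kron t A C) (kron t A C) δ - ccorr (kron t A C) (kron t A D) δ -
        ccorr (kron t A D) (kron t A C) δ + ccorr (kron t A D) (kron t A D) δ := by
    rw [kron_sub_right t A C D]
    exact ccorr_sub_sub _ _ _ _ fAC fAD δ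
  have hquad := quad_sum ht hA hB hC hD hAB hCD δ hδ
  rw [autocorr_eq, autocorr_eq, autocorr_eq, autocorr_eq] at hquad
  rw [hx11, hx22, hy11, hy22]
  linear_combination (1/2 : ℂ) * hquad


lemma box_pos {s t : Fin r → ℕ} {i : Fin r → ℤ}
    (hbox : InBox (fun k => s k * t k) i) (k : Fin r) :
    (0:ℤ) < (t k : ℤ) ∧ (0:ℤ) < (s k : ℤ) := by
  have h : 0 ≤ i k ∧ i k < (s k : ℤ) * (t k : ℤ) := inBox_mul.mp hbox k
  have h9 : (0:ℤ) < (s k:ℤ) * (t k:ℤ) := lt_of_le_of_lt h.1 h.2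
  constructor
  · by_contra hle
    push_neg at hle
    have ht0 : ((t k : ℕ) : ℤ) = 0 := le_antisymm hle (Int.natCast_nonneg _)
    rw [ht0, mul_zero] at h9
    exact absurd h9 (lt_irrefl 0)
  · by_contra hle
    push_neg at hle
    have hs0 : ((s k : ℕ) : ℤ) = 0 := le_antisymm hle (Int.natCast_nonneg _)
    rw [hs0, zero_mul] at h9
    exact absurd h9 (lt_irrefl 0)

lemma binary_E {s t : Fin r → ℕ} {A B C D : Arr r}
    (hA : IsBinary s A) (hB : IsBinary s B) (hC : IsBinary t C) (hD : IsBinary t D) :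
    IsBinary (fun k => s k * t k) (fun i => (1 / 2 : ℂ) *
      (kron t A (fun j => C j + D j) i + kron t B (fun j => C j - D j) i)) := by
  constructor
  · intro i hbox
    show (1 / 2 : ℂ) * (kron t A (fun j => C j + D j) i + kron t B (fun j => C j - D j) i) = 0
    rw [kron_supported hA.1 (SupportedOn.add hC.1 hD.1) i hbox,
      kron_supported hB.1 (SupportedOn.sub hC.1 hD.1) i hbox]
    ring
  · intro i hbox
    have htk : ∀ k, (0:ℤ) < (t k : ℤ) := fun k => (box_pos hbox k).1
    have hq : InBox s (fun k => i k / (t k : ℤ)) := by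
      intro k
      have h : 0 ≤ i k ∧ i k < (s k : ℤ) * (t k : ℤ) := inBox_mul.mp hbox k
      exact ⟨Int.ediv_nonneg h.1 (htk k).le, (Int.ediv_lt_iff_lt_mul (htk k)).mpr h.2⟩
    have hj : InBox t (fun k => i k % (t k : ℤ)) := by
      intro k
      exact ⟨Int.emod_nonneg _ (htk k).ne', Int.emod_lt_of_pos _ (htk k)⟩
    have ha := hA.2 _ hq
    have hb := hB.2 _ hq
    have hc := hC.2 _ hj
    have hd := hD.2 _ hj
    rcases ha with ha | ha <;> rcases hb with hb | hb <;> rcases hc with hc | hc <;>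
      rcases hd with hd | hd <;>
      simp only [kron, ha, hb, hc, hd] <;> norm_num

lemma binary_F {s t : Fin r → ℕ} {A B C D : Arr r}
    (hA : IsBinary s A) (hB : IsBinary s B) (hC : IsBinary t C) (hD : IsBinary t D) :
    IsBinary (fun k => s k * t k) (fun i => (1 / 2 : ℂ) *
      (kron t (flipConj s B) (fun j => C j + D j) i -
        kron t (flipConj s A) (fun j => C j - D j) i)) := by
  constructor
  · intro i hbox
    show (1 / 2 : ℂ) * (kron t (flipConj s B) (fun j => C j + D j) i -
      kron t (flipConj s A) (fun j => C j - D j) i) = 0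
    rw [kron_supported (flipConj_supported hB.1) (SupportedOn.add hC.1 hD.1) i hbox,
      kron_supported (flipConj_supported hA.1) (SupportedOn.sub hC.1 hD.1) i hbox]
    ring
  · intro i hbox
    have htk : ∀ k, (0:ℤ) < (t k : ℤ) := fun k => (box_pos hbox k).1
    have hsk : ∀ k, (0:ℤ) < (s k : ℤ) := fun k => (box_pos hbox k).2
    have hq : InBox s (fun k => i k / (t k : ℤ)) := by
      intro k
      have h : 0 ≤ i k ∧ i k < (s k : ℤ) * (t k : ℤ) := inBox_mul.mp hbox k
      exact ⟨Int.ediv_nonneg h.1 (htk k).le, (Int.ediv_lt_iff_lt_mul (htk k)).mpr h.2⟩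
    have hq' : InBox s (fun k => (s k : ℤ) - 1 - i k / (t k : ℤ)) := by
      intro k
      have h1 : 0 ≤ i k / (t k : ℤ) ∧ i k / (t k : ℤ) < (s k : ℤ) := hq k
      show 0 ≤ (s k : ℤ) - 1 - i k / (t k : ℤ) ∧ (s k : ℤ) - 1 - i k / (t k : ℤ) < (s k : ℤ)
      omega
    have hj : InBox t (fun k => i k % (t k : ℤ)) := by
      intro k
      exact ⟨Int.emod_nonneg _ (htk k).ne', Int.emod_lt_of_pos _ (htk k)⟩
    have ha := hA.2 _ hq'
    have hb := hB.2 _ hq'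
    have hc := hC.2 _ hj
    have hd := hD.2 _ hj
    rcases ha with ha | ha <;> rcases hb with hb | hb <;> rcases hc with hc | hc <;>
      rcases hd with hd | hd <;>
      simp only [kron, flipConj, ha, hb, hc, hd, map_one, map_neg] <;> norm_num


lemma autocorr_of_zero {X : Arr r} (h : ∀ i, X i = 0) (δ : Fin r → ℤ) : autocorr X δ = 0 := by
  unfold autocorr
  have : ∀ i : Fin r → ℤ, X i * (starRingEnd ℂ) (X (i - δ)) = (fun _ : Fin r → ℤ => (0:ℂ)) i :=
    fun i => by rw [h i, zero_mul]
  rw [finsum_congr this, finsum_zero]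

lemma weight_of_zero {X : Arr r} (h : ∀ i, X i = 0) : weight X = 0 := by
  unfold weight
  have : ∀ i : Fin r → ℤ, ‖X i‖ ^ 2 = (fun _ : Fin r → ℤ => (0:ℝ)) i :=
    fun i => by rw [h i]; simp
  rw [finsum_congr this, finsum_zero]

end Stmt5Aux

/-- From binary GCA pairs {A,B} of size s and {C,D} of size t,
the arrays E = ½[A⊗(C+D) + B⊗(C−D)] and F = ½[B*⊗(C+D) − A*⊗(C−D)] form a
binary GCA pair of size s₁t₁×⋯×s_r t_r (in particular every entry of E, F is ±1). -/
theorem stmt5 {r : ℕ} (s t : Fin r → ℕ) (A B C D : Arr r)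
    (hA : IsBinary s A) (hB : IsBinary s B) (hAB : ComplementaryPair A B)
    (hC : IsBinary t C) (hD : IsBinary t D) (hCD : ComplementaryPair C D)
    (E F : Arr r)
    (hE : E = fun i => (1 / 2 : ℂ) *
      (kron t A (fun j => C j + D j) i + kron t B (fun j => C j - D j) i))
    (hF : F = fun i => (1 / 2 : ℂ) *
      (kron t (flipConj s B) (fun j => C j + D j) i -
        kron t (flipConj s A) (fun j => C j - D j) i)) :
    IsBinary (fun k => s k * t k) E ∧ IsBinary (fun k => s k * t k) F ∧
      ComplementaryPair E F := by
  classical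
  subst hE hF
  by_cases hdeg : ∀ k, (0:ℤ) < (t k : ℤ)
  · refine ⟨Stmt5Aux.binary_E hA hB hC hD, Stmt5Aux.binary_F hA hB hC hD, ?_⟩
    intro δ
    by_cases hδ : δ = 0
    · subst hδ
      rw [if_pos rfl,
        Stmt5Aux.autocorr_zero (Stmt5Aux.supportedOn_finite (Stmt5Aux.binary_E hA hB hC hD).1),
        Stmt5Aux.autocorr_zero (Stmt5Aux.supportedOn_finite (Stmt5Aux.binary_F hA hB hC hD).1)]
      push_cast
      ring
    · rw [if_neg hδ]
      exact Stmt5Aux.EF_corr hdeg hA.1 hB.1 hC.1 hD.1 hAB hCD δ hδ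
  · push_neg at hdeg
    obtain ⟨k, hk⟩ := hdeg
    have hk0 : t k = 0 := by exact_mod_cast le_antisymm hk (Int.natCast_nonneg _)
    have hCz := Stmt5Aux.eq_zero_of_deg hC.1 k hk0
    have hDz := Stmt5Aux.eq_zero_of_deg hD.1 k hk0
    have hEz : ∀ i, (1 / 2 : ℂ) *
        (kron t A (fun j => C j + D j) i + kron t B (fun j => C j - D j) i) = 0 := by
      intro i; simp [kron, hCz, hDz]
    have hFz : ∀ i, (1 / 2 : ℂ) *
        (kron t (flipConj s B) (fun j => C j + D j) i -
          kron t (flipConj s A) (fun j => C j - D j) i) = 0 := by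
      intro i; simp [kron, hCz, hDz]
    have hNoBox : ∀ i : Fin r → ℤ, ¬ InBox (fun k => s k * t k) i := by
      intro i hbox
      have h := Stmt5Aux.inBox_mul.mp hbox k
      rw [show ((t k : ℕ) : ℤ) = 0 from by exact_mod_cast hk0, mul_zero] at h
      omega
    refine ⟨⟨fun i _ => hEz i, fun i hbox => absurd hbox (hNoBox i)⟩,
      ⟨fun i _ => hFz i, fun i hbox => absurd hbox (hNoBox i)⟩, ?_⟩
    intro δ
    rw [Stmt5Aux.autocorr_of_zero hEz δ, Stmt5Aux.autocorr_of_zero hFz δ,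
      Stmt5Aux.weight_of_zero hEz, Stmt5Aux.weight_of_zero hFz]
    split_ifs <;> simp
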